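/- Let h = 1/n for a positive integer n, and let u_h : [0,1] → ℝ be the piecewise affine function defined on each mesh interval [(j−1)h, jh] by u_h(t) = (2/h)·(t − (j−1)h) − 1 (so u_h goes linearly from −1 to 1 on each interval). Then the midpoint-rule approximation h·∑_{j=1}^{n} sin²(π·u_h(jh − h/2)) equals 0, while the exact integral ∫_0^1 sin²(π·u_h(t)) dt equals 1/2. -/

import Mathlib

open Real
open MeasureTheory intervalIntegral

theorem midpoint_rule_counterexample (n : ℕ) (hn : 0 < n) (h : ℝ) (hh : h = 1/(n:ℝ))
    (u_h : ℝ → ℝ)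
    (hu : ∀ j : ℕ, 1 ≤ j → j ≤ n →
      ∀ t ∈ Set.Ico (((j:ℝ) - 1) * h) ((j:ℝ) * h),
        u_h t = (2/h) * (t - ((j:ℝ) - 1) * h) - 1) :
    h * ∑ j ∈ Finset.Icc 1 n, (Real.sin (π * u_h ((j:ℝ) * h - h/2)))^2 = 0 ∧
    ∫ t in (0:ℝ)..1, (Real.sin (π * u_h t))^2 = 1/2 := by
  have hnpos : (0:ℝ) < n := by exact_mod_cast hn
  have hhpos : 0 < h := by rw [hh]; positivity
  have hne : h ≠ 0 := ne_of_gt hhpos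
  constructor
  · have hz : ∀ j ∈ Finset.Icc 1 n, (Real.sin (π * u_h ((j:ℝ) * h - h/2)))^2 = 0 := by
      intro j hj
      simp only [Finset.mem_Icc] at hj
      have ht : (j:ℝ) * h - h/2 ∈ Set.Ico (((j:ℝ) - 1) * h) ((j:ℝ) * h) := by
        constructor <;> [nlinarith; linarith]
      rw [hu j hj.1 hj.2 _ ht]
      have h0 : (2/h) * (((j:ℝ) * h - h/2) - ((j:ℝ) - 1) * h) - 1 = 0 := by
        field_simp; ring
      rw [h0, mul_zero, Real.sin_zero]; ring
    rw [Finset.sum_congr rfl hz]; simp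
  · set f : ℝ → ℝ := fun t => (Real.sin (π * u_h t))^2 with hf
    have key : ∀ i : ℕ, i < n →
        (∫ t in ((i:ℝ)*h)..(((i:ℝ)+1)*h), f t) = h/2 ∧
        IntervalIntegrable f volume ((i:ℝ)*h) (((i:ℝ)+1)*h) := by
      intro i hi
      set a : ℝ := (i:ℝ)*h with ha
      set b : ℝ := ((i:ℝ)+1)*h with hb
      have hab : a ≤ b := by rw [ha, hb]; nlinarith
      set g : ℝ → ℝ := fun t => (Real.sin ((2*π/h) * t + (-(π * (2*(i:ℝ)+1)))))^2 with hgdef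
      have hEqOn : ∀ t ∈ Set.Ico a b, f t = g t := by
        intro t ht
        have h1 : (1:ℕ) ≤ i + 1 := le_add_self
        have h2 : i + 1 ≤ n := hi
        have hIco : t ∈ Set.Ico (((((i+1:ℕ)):ℝ) - 1) * h) ((((i+1:ℕ)):ℝ) * h) := by
          push_cast
          simpa [ha, hb] using ht
        have heq := hu (i+1) h1 h2 t hIco
        simp only [hf, hgdef, heq]
        push_cast
        congr 2
        field_simp
        ring
      have hbne : ∀ᵐ x : ℝ, x ≠ b := by
        refine (MeasureTheory.ae_iff).mpr ?_
        simp [Real.volume_singleton]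
      have haeq : ∀ᵐ x : ℝ, x ∈ Set.uIoc a b → f x = g x := by
        filter_upwards [hbne] with x hx hmem
        rw [Set.uIoc_of_le hab] at hmem
        exact hEqOn x ⟨le_of_lt hmem.1, lt_of_le_of_ne hmem.2 hx⟩
      have hgcont : Continuous g := by rw [hgdef]; fun_prop
      have hgint : IntervalIntegrable g volume a b := hgcont.intervalIntegrable a b
      have hfint : IntervalIntegrable f volume a b := by
        refine hgint.congr_ae ?_
        have hmem := MeasureTheory.ae_restrict_mem (μ := volume) (measurableSet_uIoc (a := a) (b := b))
        filter_upwards [hmem, MeasureTheory.ae_restrict_of_ae haeq] with x h1 h2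
        exact (h2 h1).symm
      refine ⟨?_, hfint⟩
      rw [intervalIntegral.integral_congr_ae haeq]
      have hA : 2*π/h ≠ 0 := by positivity
      rw [hgdef]
      rw [intervalIntegral.integral_comp_mul_add (fun x => (Real.sin x)^2) hA (-(π * (2*(i:ℝ)+1)))]
      have e1 : 2*π/h * a + (-(π * (2*(i:ℝ)+1))) = -π := by rw [ha]; field_simp; ring
      have e2 : 2*π/h * b + (-(π * (2*(i:ℝ)+1))) = π := by rw [hb]; field_simp; ring
      rw [e1, e2, integral_sin_sq]
      simp only [Real.sin_pi, Real.sin_neg, neg_zero, zero_mul, mul_zero, smul_eq_mul]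
      field_simp
      ring
    have hint : ∀ k < n, IntervalIntegrable f volume ((fun i : ℕ => (i:ℝ)*h) k) ((fun i : ℕ => (i:ℝ)*h) (k+1)) := by
      intro k hk
      have := (key k hk).2
      simpa [Nat.cast_add, Nat.cast_one, add_comm] using this
    have hsum := intervalIntegral.sum_integral_adjacent_intervals (f := f) (μ := volume)
      (a := fun i : ℕ => (i:ℝ)*h) hint
    beta_reduce at hsum
    have h0 : ((0:ℕ):ℝ)*h = 0 := by simp
    have h1 : ((n:ℕ):ℝ)*h = 1 := by rw [hh]; field_simp
    rw [h0, h1] at hsum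
    rw [← hsum]
    have hconst : ∀ k ∈ Finset.range n, (∫ x in ((k:ℝ)*h)..(((k+1:ℕ):ℝ)*h), f x) = h/2 := by
      intro k hk
      have hk2 := (key k (Finset.mem_range.mp hk)).1
      push_cast
      convert hk2 using 3
    rw [Finset.sum_congr rfl hconst]
    simp only [Finset.sum_const, Finset.card_range, nsmul_eq_mul]
    rw [hh]; field_simp
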